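/- Let (J, u, ω, h, P) be a classical solution of the planar non-resistive MHD system in Lagrangian coordinates on ℝ × (0,T) with J > 0 and ρ₀ > 0 everywhere, with ρ₀ differentiable and all partial derivatives appearing below existing and continuous. Then the effective viscous flux G := λ ∂_y u / J − P − |h|²/(8π) satisfies pointwise: ∂_t G − (λ/J) ∂_y( ∂_y G / ρ₀ ) = −γ (∂_y u / J) G + ((2−γ)/(8π)) (∂_y u / J) |h|² − (γ−1) μ |∂_y ω / J|² − (1/(4π J)) h·∂_y ω. -/

import Mathlib

open Real MeasureTheory
open scoped InnerProductSpace

noncomputable section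

/-- The plane `ℝ²` as a Euclidean space, target of the transverse velocity and
magnetic field. -/
abbrev E2 := EuclideanSpace ℝ (Fin 2)

/-- Partial derivative in time of a scalar field `f = f(y, t)`. -/
def pdt (f : ℝ → ℝ → ℝ) (y t : ℝ) : ℝ := deriv (fun s => f y s) t

/-- Partial derivative in space of a scalar field `f = f(y, t)`. -/
def pdy (f : ℝ → ℝ → ℝ) (y t : ℝ) : ℝ := deriv (fun z => f z t) y

/-- Partial derivative in time of an `ℝ²`-valued field. -/
def pdtV (f : ℝ → ℝ → E2) (y t : ℝ) : E2 := deriv (fun s => f y s) t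

/-- Partial derivative in space of an `ℝ²`-valued field. -/
def pdyV (f : ℝ → ℝ → E2) (y t : ℝ) : E2 := deriv (fun z => f z t) y

namespace MHDaux

variable {E : Type*} [NormedAddCommGroup E] [NormedSpace ℝ E]
variable {f : ℝ → ℝ → E} {S : Set ℝ} {y t : ℝ}

lemma memU (hS : IsOpen S) (ht : t ∈ S) :
    (Set.univ : Set ℝ) ×ˢ S ∈ nhds ((y, t) : ℝ × ℝ) :=
  (isOpen_univ.prod hS).mem_nhds ⟨trivial, ht⟩

lemma diffAt (hS : IsOpen S)
    (hf : ContDiffOn ℝ 2 (fun p : ℝ × ℝ => f p.1 p.2) (Set.univ ×ˢ S)) (ht : t ∈ S) :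
    DifferentiableAt ℝ (fun p : ℝ × ℝ => f p.1 p.2) (y, t) :=
  (hf.contDiffAt (memU hS ht)).differentiableAt (by norm_num)

lemma sliceY (hS : IsOpen S)
    (hf : ContDiffOn ℝ 2 (fun p : ℝ × ℝ => f p.1 p.2) (Set.univ ×ˢ S)) (ht : t ∈ S) :
    HasDerivAt (fun z => f z t)
      (fderiv ℝ (fun p : ℝ × ℝ => f p.1 p.2) (y, t) (1, 0)) y := by
  have h1 : HasDerivAt (fun z : ℝ => ((z, t) : ℝ × ℝ)) ((1 : ℝ), (0 : ℝ)) y :=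
    HasDerivAt.prodMk (hasDerivAt_id y) (hasDerivAt_const y t)
  exact (diffAt hS hf ht).hasFDerivAt.comp_hasDerivAt y h1

lemma sliceT (hS : IsOpen S)
    (hf : ContDiffOn ℝ 2 (fun p : ℝ × ℝ => f p.1 p.2) (Set.univ ×ˢ S)) (ht : t ∈ S) :
    HasDerivAt (fun s => f y s)
      (fderiv ℝ (fun p : ℝ × ℝ => f p.1 p.2) (y, t) (0, 1)) t := by
  have h1 : HasDerivAt (fun s : ℝ => ((y, s) : ℝ × ℝ)) ((0 : ℝ), (1 : ℝ)) t :=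
    HasDerivAt.prodMk (hasDerivAt_const t y) (hasDerivAt_id t)
  exact (diffAt hS hf ht).hasFDerivAt.comp_hasDerivAt t h1

lemma deriv_sliceY (hS : IsOpen S)
    (hf : ContDiffOn ℝ 2 (fun p : ℝ × ℝ => f p.1 p.2) (Set.univ ×ˢ S)) (ht : t ∈ S) :
    deriv (fun z => f z t) y = fderiv ℝ (fun p : ℝ × ℝ => f p.1 p.2) (y, t) (1, 0) :=
  (sliceY hS hf ht).deriv

lemma deriv_sliceT (hS : IsOpen S)
    (hf : ContDiffOn ℝ 2 (fun p : ℝ × ℝ => f p.1 p.2) (Set.univ ×ˢ S)) (ht : t ∈ S) :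
    deriv (fun s => f y s) t = fderiv ℝ (fun p : ℝ × ℝ => f p.1 p.2) (y, t) (0, 1) :=
  (sliceT hS hf ht).deriv

lemma diffFderiv (hS : IsOpen S)
    (hf : ContDiffOn ℝ 2 (fun p : ℝ × ℝ => f p.1 p.2) (Set.univ ×ˢ S)) (ht : t ∈ S) :
    DifferentiableAt ℝ (fderiv ℝ (fun p : ℝ × ℝ => f p.1 p.2)) (y, t) :=
  (((hf.contDiffAt (memU hS ht)).fderiv_right (m := 1) (by norm_num))).differentiableAt
    (by norm_num)

/-- derivative in `y` of `z ↦ fderiv f (z,t) v`. -/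
lemma fderiv_apply_sliceY (hS : IsOpen S)
    (hf : ContDiffOn ℝ 2 (fun p : ℝ × ℝ => f p.1 p.2) (Set.univ ×ˢ S)) (ht : t ∈ S)
    (v : ℝ × ℝ) :
    HasDerivAt (fun z => fderiv ℝ (fun p : ℝ × ℝ => f p.1 p.2) (z, t) v)
      (fderiv ℝ (fderiv ℝ (fun p : ℝ × ℝ => f p.1 p.2)) (y, t) (1, 0) v) y := by
  have h1 : HasDerivAt (fun z : ℝ => ((z, t) : ℝ × ℝ)) ((1 : ℝ), (0 : ℝ)) y :=
    HasDerivAt.prodMk (hasDerivAt_id y) (hasDerivAt_const y t)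
  have h2 := (diffFderiv hS hf ht).hasFDerivAt.comp_hasDerivAt y h1
  have h3 := h2.clm_apply (hasDerivAt_const y v)
  simpa using h3

lemma fderiv_apply_sliceT (hS : IsOpen S)
    (hf : ContDiffOn ℝ 2 (fun p : ℝ × ℝ => f p.1 p.2) (Set.univ ×ˢ S)) (ht : t ∈ S)
    (v : ℝ × ℝ) :
    HasDerivAt (fun s => fderiv ℝ (fun p : ℝ × ℝ => f p.1 p.2) (y, s) v)
      (fderiv ℝ (fderiv ℝ (fun p : ℝ × ℝ => f p.1 p.2)) (y, t) (0, 1) v) t := by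
  have h1 : HasDerivAt (fun s : ℝ => ((y, s) : ℝ × ℝ)) ((0 : ℝ), (1 : ℝ)) t :=
    HasDerivAt.prodMk (hasDerivAt_const t y) (hasDerivAt_id t)
  have h2 := (diffFderiv hS hf ht).hasFDerivAt.comp_hasDerivAt t h1
  have h3 := h2.clm_apply (hasDerivAt_const t v)
  simpa using h3

/-- mixed derivative: `∂ₜ (∂_y f)` -/
lemma mixedYT (hS : IsOpen S)
    (hf : ContDiffOn ℝ 2 (fun p : ℝ × ℝ => f p.1 p.2) (Set.univ ×ˢ S)) (ht : t ∈ S) :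
    HasDerivAt (fun s => deriv (fun z => f z s) y)
      (fderiv ℝ (fderiv ℝ (fun p : ℝ × ℝ => f p.1 p.2)) (y, t) (0, 1) (1, 0)) t := by
  refine (fderiv_apply_sliceT hS hf ht (1, 0)).congr_of_eventuallyEq ?_
  filter_upwards [hS.mem_nhds ht] with s hs
  exact deriv_sliceY hS hf hs

/-- `∂_y (∂ₜ f)` -/
lemma mixedTY (hS : IsOpen S)
    (hf : ContDiffOn ℝ 2 (fun p : ℝ × ℝ => f p.1 p.2) (Set.univ ×ˢ S)) (ht : t ∈ S) :
    HasDerivAt (fun z => deriv (fun s => f z s) t)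
      (fderiv ℝ (fderiv ℝ (fun p : ℝ × ℝ => f p.1 p.2)) (y, t) (1, 0) (0, 1)) y := by
  refine (fderiv_apply_sliceY hS hf ht (0, 1)).congr_of_eventuallyEq ?_
  exact Filter.Eventually.of_forall fun z => deriv_sliceT hS hf ht

/-- `∂_y (∂_y f)` (differentiability only needed) -/
lemma diff_pdy_y (hS : IsOpen S)
    (hf : ContDiffOn ℝ 2 (fun p : ℝ × ℝ => f p.1 p.2) (Set.univ ×ˢ S)) (ht : t ∈ S) :
    DifferentiableAt ℝ (fun z => deriv (fun w => f w t) z) y := by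
  have h2 : HasDerivAt (fun z => deriv (fun w => f w t) z)
      (fderiv ℝ (fderiv ℝ (fun p : ℝ × ℝ => f p.1 p.2)) (y, t) (1, 0) (1, 0)) y :=
    (fderiv_apply_sliceY hS hf ht (1, 0)).congr_of_eventuallyEq
      (Filter.Eventually.of_forall fun z => deriv_sliceY (y := z) hS hf ht)
  exact h2.differentiableAt

lemma schwarz (hS : IsOpen S)
    (hf : ContDiffOn ℝ 2 (fun p : ℝ × ℝ => f p.1 p.2) (Set.univ ×ˢ S)) (ht : t ∈ S) :
    fderiv ℝ (fderiv ℝ (fun p : ℝ × ℝ => f p.1 p.2)) (y, t) (0, 1) (1, 0)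
      = fderiv ℝ (fderiv ℝ (fun p : ℝ × ℝ => f p.1 p.2)) (y, t) (1, 0) (0, 1) :=
  ((hf.contDiffAt (memU hS ht)).isSymmSndFDerivAt (by norm_num)).eq _ _

end MHDaux

/-- `(J, u, ω, h, P)` is a classical solution of the planar non-resistive MHD system in
Lagrangian coordinates, for times in the set `S`: all the unknowns are twice continuously
differentiable (in particular all partial derivatives appearing in the system exist and
are continuous) and the five equations hold pointwise. -/
structure IsMHDSolution (lam mu gam : ℝ) (ρ₀ : ℝ → ℝ)
    (J u P : ℝ → ℝ → ℝ) (ω h : ℝ → ℝ → E2) (S : Set ℝ) : Prop where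
  smooth_J : ContDiffOn ℝ 2 (fun p : ℝ × ℝ => J p.1 p.2) (Set.univ ×ˢ S)
  smooth_u : ContDiffOn ℝ 2 (fun p : ℝ × ℝ => u p.1 p.2) (Set.univ ×ˢ S)
  smooth_P : ContDiffOn ℝ 2 (fun p : ℝ × ℝ => P p.1 p.2) (Set.univ ×ˢ S)
  smooth_ω : ContDiffOn ℝ 2 (fun p : ℝ × ℝ => ω p.1 p.2) (Set.univ ×ˢ S)
  smooth_h : ContDiffOn ℝ 2 (fun p : ℝ × ℝ => h p.1 p.2) (Set.univ ×ˢ S)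
  /-- (i) `∂ₜ J = ∂_y u` -/
  mass : ∀ y : ℝ, ∀ t ∈ S, pdt J y t = pdy u y t
  /-- (ii) `ρ₀ ∂ₜ u − λ ∂_y(∂_y u / J) + ∂_y P + (1/(4π)) h·∂_y h = 0` -/
  momentum : ∀ y : ℝ, ∀ t ∈ S,
    ρ₀ y * pdt u y t - lam * pdy (fun z s => pdy u z s / J z s) y t
      + pdy P y t + (1 / (4 * π)) * ⟪h y t, pdyV h y t⟫_ℝ = 0
  /-- (iii) `ρ₀ ∂ₜ ω − μ ∂_y(∂_y ω / J) = (1/(4π)) ∂_y h` -/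
  momentumT : ∀ y : ℝ, ∀ t ∈ S,
    ρ₀ y • pdtV ω y t - mu • pdyV (fun z s => (J z s)⁻¹ • pdyV ω z s) y t
      = (1 / (4 * π)) • pdyV h y t
  /-- (iv) `∂ₜ h + (∂_y u / J) h − ∂_y ω / J = 0` -/
  magnetic : ∀ y : ℝ, ∀ t ∈ S,
    pdtV h y t + (pdy u y t / J y t) • h y t - (J y t)⁻¹ • pdyV ω y t = 0
  /-- (v) `∂ₜ P + γ (∂_y u / J) P = (γ−1)(λ (∂_y u / J)² + μ |∂_y ω / J|²)` -/
  pressure : ∀ y : ℝ, ∀ t ∈ S,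
    pdt P y t + gam * (pdy u y t / J y t) * P y t
      = (gam - 1) * (lam * (pdy u y t / J y t) ^ 2 + mu * ‖(J y t)⁻¹ • pdyV ω y t‖ ^ 2)


/-- The effective viscous flux `G := λ ∂_y u / J − P − |h|²/(8π)`. -/
def Gflux (lam : ℝ) (J u P : ℝ → ℝ → ℝ) (h : ℝ → ℝ → E2) : ℝ → ℝ → ℝ := fun y t =>
  lam * pdy u y t / J y t - P y t - ‖h y t‖ ^ 2 / (8 * π)

/-- The transverse effective viscous flux `F := μ ∂_y ω / J + h/(4π)`. -/
def Fflux (mu : ℝ) (J : ℝ → ℝ → ℝ) (ω h : ℝ → ℝ → E2) : ℝ → ℝ → E2 := fun y t =>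
  mu • ((J y t)⁻¹ • pdyV ω y t) + (1 / (4 * π)) • h y t

/-- The squared magnetic field `H := |h|²`. -/
def Hfield (h : ℝ → ℝ → E2) : ℝ → ℝ → ℝ := fun y t => ‖h y t‖ ^ 2

/-- for a classical solution of the planar non-resistive MHD system in
Lagrangian coordinates on `ℝ × (0,T)` with `J > 0` and `ρ₀ > 0`, `ρ₀` differentiable,
the effective viscous flux `G := λ ∂_y u / J − P − |h|²/(8π)` satisfies pointwise
`∂ₜ G − (λ/J) ∂_y(∂_y G / ρ₀)
  = −γ (∂_y u / J) G + ((2−γ)/(8π)) (∂_y u / J) |h|² − (γ−1) μ |∂_y ω / J|²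
    − (1/(4πJ)) h·∂_y ω`. -/
theorem stmt_5 (T lam mu gam : ℝ) (hT : 0 < T) (hlam : 0 < lam) (hmu : 0 < mu)
    (hgam : 1 < gam) (ρ₀ : ℝ → ℝ) (hρpos : ∀ y : ℝ, 0 < ρ₀ y)
    (hρdiff : Differentiable ℝ ρ₀)
    (J u P : ℝ → ℝ → ℝ) (ω h : ℝ → ℝ → E2)
    (hJpos : ∀ y : ℝ, ∀ t ∈ Set.Ioo (0 : ℝ) T, 0 < J y t)
    (hsol : IsMHDSolution lam mu gam ρ₀ J u P ω h (Set.Ioo 0 T)) :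
    ∀ y : ℝ, ∀ t ∈ Set.Ioo (0 : ℝ) T,
      pdt (Gflux lam J u P h) y t
          - (lam / J y t) * pdy (fun z s => pdy (Gflux lam J u P h) z s / ρ₀ z) y t
        = -gam * (pdy u y t / J y t) * Gflux lam J u P h y t
          + ((2 - gam) / (8 * π)) * (pdy u y t / J y t) * ‖h y t‖ ^ 2
          - (gam - 1) * mu * ‖(J y t)⁻¹ • pdyV ω y t‖ ^ 2
          - (1 / (4 * π * J y t)) * ⟪h y t, pdyV ω y t⟫_ℝ := by

  obtain ⟨sJ, su, sP, sω, sh, mass, momentum, momentumT, magnetic, pressure⟩ := hsol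
  intro y t ht
  have hS : IsOpen (Set.Ioo (0:ℝ) T) := isOpen_Ioo
  have hπ : (π : ℝ) ≠ 0 := Real.pi_ne_zero
  have hJ0 : J y t ≠ 0 := (hJpos y t ht).ne'
  -- Step B : the space derivative of G equals ρ₀ ∂ₜu (from the momentum equation)
  have hB : ∀ z : ℝ, pdy (Gflux lam J u P h) z t = ρ₀ z * pdt u z t := by
    intro z
    have hJz : J z t ≠ 0 := (hJpos z t ht).ne'
    have h1 : DifferentiableAt ℝ (fun w => pdy u w t) z := MHDaux.diff_pdy_y hS su ht
    have h2 : DifferentiableAt ℝ (fun w => J w t) z :=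
      (MHDaux.sliceY hS sJ ht).differentiableAt
    have hq : HasDerivAt (fun w => pdy u w t / J w t)
        (pdy (fun w s => pdy u w s / J w s) z t) z := (h1.div h2 hJz).hasDerivAt
    have hP' : HasDerivAt (fun w => P w t) (pdy P z t) z :=
      (MHDaux.sliceY hS sP ht).differentiableAt.hasDerivAt
    have hh : HasDerivAt (fun w => h w t) (pdyV h z t) z :=
      (MHDaux.sliceY hS sh ht).differentiableAt.hasDerivAt
    have hN : HasDerivAt (fun w => ‖h w t‖ ^ 2) (2 * ⟪h z t, pdyV h z t⟫_ℝ) z := by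
      have h3 := hh.inner (𝕜 := ℝ) hh
      have h4 : HasDerivAt (fun w => ‖h w t‖ ^ 2)
          (⟪h z t, pdyV h z t⟫_ℝ + ⟪pdyV h z t, h z t⟫_ℝ) z := by
        exact h3.congr_of_eventuallyEq (Filter.Eventually.of_forall fun w =>
          (real_inner_self_eq_norm_sq (h w t)).symm)
      convert h4 using 1
      rw [real_inner_comm]; ring
    have hG : HasDerivAt (fun w => Gflux lam J u P h w t)
        (lam * pdy (fun w s => pdy u w s / J w s) z t - pdy P z t
          - 2 * ⟪h z t, pdyV h z t⟫_ℝ / (8 * π)) z := by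
      have h5 := ((hq.const_mul lam).sub hP').sub (hN.div_const (8 * π))
      refine h5.congr_of_eventuallyEq (Filter.Eventually.of_forall fun w => ?_)
      simp [Gflux, mul_div_assoc]
    have e1 : pdy (Gflux lam J u P h) z t
        = lam * pdy (fun w s => pdy u w s / J w s) z t - pdy P z t
          - 2 * ⟪h z t, pdyV h z t⟫_ℝ / (8 * π) := hG.deriv
    have hm := momentum z t ht
    rw [e1]
    linear_combination -hm
  -- Step C : the second space derivative term, via Schwarz symmetry
  have hC : pdy (fun z s => pdy (Gflux lam J u P h) z s / ρ₀ z) y t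
      = fderiv ℝ (fderiv ℝ (fun p : ℝ × ℝ => u p.1 p.2)) (y, t) (0, 1) (1, 0) := by
    have e : (fun z => pdy (Gflux lam J u P h) z t / ρ₀ z) = fun z => pdt u z t := by
      funext z
      rw [hB z, mul_div_cancel_left₀ _ (hρpos z).ne']
    show deriv (fun z => pdy (Gflux lam J u P h) z t / ρ₀ z) y = _
    rw [e]
    exact (MHDaux.mixedTY hS su ht).deriv.trans (MHDaux.schwarz hS su ht).symm
  -- Step A : the time derivative of G
  have hJt : HasDerivAt (fun s => J y s) (pdy u y t) t := by
    have h0 : HasDerivAt (fun s => J y s) (pdt J y t) t :=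
      (MHDaux.sliceT hS sJ ht).differentiableAt.hasDerivAt
    rwa [mass y t ht] at h0
  have hMt : HasDerivAt (fun s => pdy u y s)
      (fderiv ℝ (fderiv ℝ (fun p : ℝ × ℝ => u p.1 p.2)) (y, t) (0, 1) (1, 0)) t :=
    MHDaux.mixedYT hS su ht
  have hPt : HasDerivAt (fun s => P y s) (pdt P y t) t :=
    (MHDaux.sliceT hS sP ht).differentiableAt.hasDerivAt
  have hht : HasDerivAt (fun s => h y s) (pdtV h y t) t :=
    (MHDaux.sliceT hS sh ht).differentiableAt.hasDerivAt
  have hNt : HasDerivAt (fun s => ‖h y s‖ ^ 2) (2 * ⟪h y t, pdtV h y t⟫_ℝ) t := by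
    have h3 := hht.inner (𝕜 := ℝ) hht
    have h4 : HasDerivAt (fun s => ‖h y s‖ ^ 2)
        (⟪h y t, pdtV h y t⟫_ℝ + ⟪pdtV h y t, h y t⟫_ℝ) t := by
      exact h3.congr_of_eventuallyEq (Filter.Eventually.of_forall fun s =>
        (real_inner_self_eq_norm_sq (h y s)).symm)
    convert h4 using 1
    rw [real_inner_comm]; ring
  have hGt : HasDerivAt (fun s => Gflux lam J u P h y s)
      (lam * ((fderiv ℝ (fderiv ℝ (fun p : ℝ × ℝ => u p.1 p.2)) (y, t) (0, 1) (1, 0)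
            * J y t - pdy u y t * pdy u y t) / J y t ^ 2)
        - pdt P y t - 2 * ⟪h y t, pdtV h y t⟫_ℝ / (8 * π)) t := by
    have h5 := (((hMt.div hJt hJ0).const_mul lam).sub hPt).sub (hNt.div_const (8 * π))
    refine h5.congr_of_eventuallyEq (Filter.Eventually.of_forall fun s => ?_)
    simp [Gflux, mul_div_assoc]
  have eA : pdt (Gflux lam J u P h) y t
      = lam * ((fderiv ℝ (fderiv ℝ (fun p : ℝ × ℝ => u p.1 p.2)) (y, t) (0, 1) (1, 0)
            * J y t - pdy u y t * pdy u y t) / J y t ^ 2)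
        - pdt P y t - 2 * ⟪h y t, pdtV h y t⟫_ℝ / (8 * π) := hGt.deriv
  -- the magnetic equation gives the time derivative of h
  have hinner : ⟪h y t, pdtV h y t⟫_ℝ
      = (J y t)⁻¹ * ⟪h y t, pdyV ω y t⟫_ℝ - (pdy u y t / J y t) * ‖h y t‖ ^ 2 := by
    have h6 := magnetic y t ht
    rw [sub_eq_zero] at h6
    have h7 : pdtV h y t = (J y t)⁻¹ • pdyV ω y t - (pdy u y t / J y t) • h y t := by
      rw [eq_sub_iff_add_eq]; exact h6
    rw [h7, inner_sub_right, inner_smul_right, inner_smul_right, real_inner_self_eq_norm_sq]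
  -- the pressure equation gives the time derivative of P
  have hPeq : pdt P y t
      = (gam - 1) * (lam * (pdy u y t / J y t) ^ 2 + mu * ‖(J y t)⁻¹ • pdyV ω y t‖ ^ 2)
        - gam * (pdy u y t / J y t) * P y t := by
    have := pressure y t ht; linarith
  rw [eA, hC, hinner, hPeq]
  have eG : Gflux lam J u P h y t
      = lam * pdy u y t / J y t - P y t - ‖h y t‖ ^ 2 / (8 * π) := rfl
  rw [eG]
  field_simp
  ring
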